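/- (Hörmander bilinear convolution estimate.) Let s₁, s₂, s₃ be real numbers with s₁+s₂ ≥ 0, s₃ ≤ min{s₁, s₂}, and s₃ < s₁+s₂ − d/2. Define F(ξ,ζ) = ⟨ξ⟩^{s₃} / (⟨ξ−ζ⟩^{s₁} ⟨ζ⟩^{s₂}), and for compactly supported f, g : Z^d → C set T_F(f,g)(ξ) = Σ_{ζ∈Z^d} F(ξ,ζ) f(ξ−ζ) g(ζ). Then there exists C > 0 such that ‖T_F(f,g)‖_{ℓ²(Z^d)} ≤ C ‖f‖_{ℓ²(Z^d)} ‖g‖_{ℓ²(Z^d)}. -/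

import Mathlib

open scoped BigOperators

/-- Japanese bracket `⟨ξ⟩ = (1+|ξ|²)^{1/2}` of a lattice point. -/
noncomputable def latJap {d : ℕ} (ξ : Fin d → ℤ) : ℝ :=
  Real.sqrt (1 + ∑ i, ((ξ i : ℝ)) ^ 2)

/-- The Hörmander kernel `F(ξ,ζ) = ⟨ξ⟩^{s₃}/(⟨ξ-ζ⟩^{s₁}⟨ζ⟩^{s₂})`. -/
noncomputable def hormF {d : ℕ} (s₁ s₂ s₃ : ℝ) (ξ ζ : Fin d → ℤ) : ℝ :=
  (latJap ξ) ^ s₃ / ((latJap (ξ - ζ)) ^ s₁ * (latJap ζ) ^ s₂)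

private lemma one_le_latJap {d : ℕ} (ξ : Fin d → ℤ) : 1 ≤ latJap ξ := by
  have h : (0:ℝ) ≤ ∑ i, ((ξ i : ℝ)) ^ 2 := by positivity
  calc (1:ℝ) = Real.sqrt 1 := Real.sqrt_one.symm
    _ ≤ Real.sqrt (1 + ∑ i, ((ξ i : ℝ)) ^ 2) := Real.sqrt_le_sqrt (by linarith)

private lemma latJap_pos {d : ℕ} (ξ : Fin d → ℤ) : 0 < latJap ξ :=
  lt_of_lt_of_le one_pos (one_le_latJap ξ)

private lemma latJap_sq {d : ℕ} (ξ : Fin d → ℤ) :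
    (latJap ξ) ^ 2 = 1 + ∑ i, ((ξ i : ℝ)) ^ 2 := by
  rw [latJap, Real.sq_sqrt]; positivity

private lemma latJap_neg {d : ℕ} (ξ : Fin d → ℤ) : latJap (-ξ) = latJap ξ := by
  simp [latJap]

private lemma latJap_add_le {d : ℕ} (x y : Fin d → ℤ) :
    latJap (x + y) ≤ 2 * max (latJap x) (latJap y) := by
  have hx := one_le_latJap x
  have hy := one_le_latJap y
  have hm : 1 ≤ max (latJap x) (latJap y) := le_trans hx (le_max_left _ _)
  have h2 : (0:ℝ) ≤ 2 * max (latJap x) (latJap y) := by linarith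
  rw [latJap, show 2 * max (latJap x) (latJap y)
      = Real.sqrt ((2 * max (latJap x) (latJap y)) ^ 2) from (Real.sqrt_sq h2).symm]
  apply Real.sqrt_le_sqrt
  have hxs := latJap_sq x
  have hys := latJap_sq y
  have hmx : latJap x ≤ max (latJap x) (latJap y) := le_max_left _ _
  have hmy : latJap y ≤ max (latJap x) (latJap y) := le_max_right _ _
  have key : ∑ i, (((x + y) i : ℝ)) ^ 2
      ≤ 2 * ∑ i, ((x i : ℝ)) ^ 2 + 2 * ∑ i, ((y i : ℝ)) ^ 2 := by
    calc ∑ i, (((x + y) i : ℝ)) ^ 2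
        ≤ ∑ i, (2 * ((x i : ℝ)) ^ 2 + 2 * ((y i : ℝ)) ^ 2) := by
          apply Finset.sum_le_sum
          intro i _
          have : (((x + y) i : ℝ)) = (x i : ℝ) + (y i : ℝ) := by
            simp [Pi.add_apply]
          rw [this]
          nlinarith [sq_nonneg ((x i : ℝ) - (y i : ℝ))]
      _ = 2 * ∑ i, ((x i : ℝ)) ^ 2 + 2 * ∑ i, ((y i : ℝ)) ^ 2 := by
          rw [Finset.sum_add_distrib, ← Finset.mul_sum, ← Finset.mul_sum]
  have q1 : latJap x * latJap x ≤ max (latJap x) (latJap y) * max (latJap x) (latJap y) :=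
    mul_self_le_mul_self (by linarith) hmx
  have q2 : latJap y * latJap y ≤ max (latJap x) (latJap y) * max (latJap x) (latJap y) :=
    mul_self_le_mul_self (by linarith) hmy
  nlinarith [key, hxs, hys]

private lemma rpow_comp {x y : ℝ} (hx : 1 ≤ x) (hy : 1 ≤ y)
    (h1 : x ≤ 2 * y) (t : ℝ) (h2 : y ≤ 2 * x) :
    x ^ t ≤ 2 ^ |t| * y ^ t := by
  have hx0 : (0:ℝ) < x := by linarith
  have hy0 : (0:ℝ) < y := by linarith
  rcases le_or_gt 0 t with ht | ht
  · rw [abs_of_nonneg ht]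
    calc x ^ t ≤ (2 * y) ^ t := Real.rpow_le_rpow hx0.le h1 ht
      _ = 2 ^ t * y ^ t := Real.mul_rpow (by norm_num) hy0.le
  · rw [abs_of_neg ht]
    have hyx : y / 2 ≤ x := by linarith
    calc x ^ t ≤ (y / 2) ^ t :=
          Real.rpow_le_rpow_of_nonpos (by positivity) hyx ht.le
      _ = y ^ t / 2 ^ t := Real.div_rpow hy0.le (by norm_num : (0:ℝ) ≤ 2) t
      _ = 2 ^ (-t) * y ^ t := by
          rw [Real.rpow_neg (by norm_num : (0:ℝ) ≤ 2), div_eq_mul_inv, mul_comm]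

private lemma hormF_eq {d : ℕ} (s₁ s₂ s₃ : ℝ) (ξ ζ : Fin d → ℤ) :
    hormF s₁ s₂ s₃ ξ ζ
      = (latJap ξ) ^ s₃ * (latJap (ξ - ζ)) ^ (-s₁) * (latJap ζ) ^ (-s₂) := by
  rw [hormF, Real.rpow_neg (latJap_pos _).le, Real.rpow_neg (latJap_pos _).le,
    div_eq_mul_inv, mul_inv]
  ring

private lemma hormF_nonneg {d : ℕ} (s₁ s₂ s₃ : ℝ) (ξ ζ : Fin d → ℤ) :
    0 ≤ hormF s₁ s₂ s₃ ξ ζ := by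
  rw [hormF]
  have := latJap_pos ξ; have := latJap_pos (ξ - ζ); have := latJap_pos ζ
  positivity

private lemma hormF_le {d : ℕ} {s₁ s₂ s₃ : ℝ} (h12 : 0 ≤ s₁ + s₂)
    (h31 : s₃ ≤ s₁) (h32 : s₃ ≤ s₂) (ξ ζ : Fin d → ℤ) :
    hormF s₁ s₂ s₃ ξ ζ ≤ 2 ^ (|s₁| + |s₃|) *
      ((latJap (ξ - ζ)) ^ (-(s₁ + s₂ - s₃)) + (latJap ζ) ^ (-(s₁ + s₂ - s₃))
        + (latJap ξ) ^ (-(s₁ + s₂ - s₃))) := by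
  rw [hormF_eq]
  set σ := s₁ + s₂ - s₃ with hσdef
  set a := latJap (ξ - ζ) with hadef
  set b := latJap ζ with hbdef
  set c := latJap ξ with hcdef
  have ha : 1 ≤ a := one_le_latJap _
  have hb : 1 ≤ b := one_le_latJap _
  have hc : 1 ≤ c := one_le_latJap _
  have hcab : c ≤ 2 * max a b := by
    have := latJap_add_le (ξ - ζ) ζ
    rw [sub_add_cancel] at this
    exact this
  have hacb : a ≤ 2 * max c b := by
    have := latJap_add_le ξ (-ζ)
    rw [latJap_neg, ← sub_eq_add_neg] at this
    exact this
  have hbca : b ≤ 2 * max c a := by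
    have := latJap_add_le ξ (-(ξ - ζ))
    rw [latJap_neg, show ξ + -(ξ - ζ) = ζ by ring] at this
    exact this
  clear_value σ a b c
  have ha0 : (0:ℝ) < a := by linarith
  have hb0 : (0:ℝ) < b := by linarith
  have hc0 : (0:ℝ) < c := by linarith
  have hCs3 : (2:ℝ) ^ |s₃| ≤ 2 ^ (|s₁| + |s₃|) :=
    Real.rpow_le_rpow_of_exponent_le one_le_two (le_add_of_nonneg_left (abs_nonneg s₁))
  have hCs1 : (2:ℝ) ^ |s₁| ≤ 2 ^ (|s₁| + |s₃|) :=
    Real.rpow_le_rpow_of_exponent_le one_le_two (le_add_of_nonneg_right (abs_nonneg s₃))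
  have hC0 : (0:ℝ) < 2 ^ (|s₁| + |s₃|) := Real.rpow_pos_of_pos two_pos _
  have haσ : (0:ℝ) ≤ a ^ (-σ) := (Real.rpow_pos_of_pos ha0 _).le
  have hbσ : (0:ℝ) ≤ b ^ (-σ) := (Real.rpow_pos_of_pos hb0 _).le
  have hcσ : (0:ℝ) ≤ c ^ (-σ) := (Real.rpow_pos_of_pos hc0 _).le
  have has1 : (0:ℝ) ≤ a ^ (-s₁) := (Real.rpow_pos_of_pos ha0 _).le
  have hbs1 : (0:ℝ) ≤ b ^ (-s₁) := (Real.rpow_pos_of_pos hb0 _).le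
  have hbs2 : (0:ℝ) ≤ b ^ (-s₂) := (Real.rpow_pos_of_pos hb0 _).le
  have hcs3 : (0:ℝ) ≤ c ^ s₃ := (Real.rpow_pos_of_pos hc0 _).le
  have has3 : (0:ℝ) ≤ a ^ s₃ := (Real.rpow_pos_of_pos ha0 _).le
  have h2s3 : (0:ℝ) ≤ (2:ℝ) ^ |s₃| := (Real.rpow_pos_of_pos two_pos _).le
  have h2s1 : (0:ℝ) ≤ (2:ℝ) ^ |s₁| := (Real.rpow_pos_of_pos two_pos _).le
  have final : ∀ u : ℝ, (2:ℝ) ^ |s₃| ≤ 2 ^ (|s₁| + |s₃|) → 0 ≤ u ^ (-σ) →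
      u ^ (-σ) ≤ a ^ (-σ) + b ^ (-σ) + c ^ (-σ) →
      (2:ℝ) ^ |s₃| * u ^ (-σ) ≤ 2 ^ (|s₁| + |s₃|) * (a ^ (-σ) + b ^ (-σ) + c ^ (-σ)) := by
    intro u hu h0 hsum
    calc (2:ℝ) ^ |s₃| * u ^ (-σ) ≤ 2 ^ (|s₁| + |s₃|) * u ^ (-σ) :=
          mul_le_mul_of_nonneg_right hu h0
      _ ≤ _ := mul_le_mul_of_nonneg_left hsum hC0.le
  have final1 : ∀ u : ℝ, (2:ℝ) ^ |s₁| ≤ 2 ^ (|s₁| + |s₃|) → 0 ≤ u ^ (-σ) →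
      u ^ (-σ) ≤ a ^ (-σ) + b ^ (-σ) + c ^ (-σ) →
      (2:ℝ) ^ |s₁| * u ^ (-σ) ≤ 2 ^ (|s₁| + |s₃|) * (a ^ (-σ) + b ^ (-σ) + c ^ (-σ)) := by
    intro u hu h0 hsum
    calc (2:ℝ) ^ |s₁| * u ^ (-σ) ≤ 2 ^ (|s₁| + |s₃|) * u ^ (-σ) :=
          mul_le_mul_of_nonneg_right hu h0
      _ ≤ _ := mul_le_mul_of_nonneg_left hsum hC0.le
  rcases le_total a b with hab | hba
  · rcases le_total a c with hac | hca
    · -- min is a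
      have hc2b : c ≤ 2 * b := by rw [max_eq_right hab] at hcab; exact hcab
      have hb2c : b ≤ 2 * c := by rw [max_eq_left hac] at hbca; exact hbca
      have h1 : c ^ s₃ ≤ 2 ^ |s₃| * b ^ s₃ := rpow_comp hc hb hc2b s₃ hb2c
      have h3 : (2:ℝ) ^ |s₃| * b ^ s₃ * a ^ (-s₁) * b ^ (-s₂)
          = 2 ^ |s₃| * (b ^ (s₃ - s₂) * a ^ (-s₁)) := by
        rw [show s₃ - s₂ = s₃ + -s₂ by ring, Real.rpow_add hb0]
        ring
      have h4 : b ^ (s₃ - s₂) ≤ a ^ (s₃ - s₂) :=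
        Real.rpow_le_rpow_of_nonpos ha0 hab (by linarith)
      have h5 : a ^ (s₃ - s₂) * a ^ (-s₁) = a ^ (-σ) := by
        rw [← Real.rpow_add ha0, hσdef]
        congr 1
        try ring
      calc c ^ s₃ * a ^ (-s₁) * b ^ (-s₂)
          ≤ 2 ^ |s₃| * b ^ s₃ * a ^ (-s₁) * b ^ (-s₂) :=
            mul_le_mul_of_nonneg_right (mul_le_mul_of_nonneg_right h1 has1) hbs2
        _ = 2 ^ |s₃| * (b ^ (s₃ - s₂) * a ^ (-s₁)) := h3
        _ ≤ 2 ^ |s₃| * (a ^ (s₃ - s₂) * a ^ (-s₁)) :=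
            mul_le_mul_of_nonneg_left (mul_le_mul_of_nonneg_right h4 has1) h2s3
        _ = 2 ^ |s₃| * a ^ (-σ) := by rw [h5]
        _ ≤ 2 ^ (|s₁| + |s₃|) * (a ^ (-σ) + b ^ (-σ) + c ^ (-σ)) :=
            final a hCs3 haσ (by linarith)
    · -- min is c  (c ≤ a ≤ b)
      have hcb : c ≤ b := le_trans hca hab
      have ha2b : a ≤ 2 * b := by rw [max_eq_right hcb] at hacb; exact hacb
      have hb2a : b ≤ 2 * a := by rw [max_eq_right hca] at hbca; exact hbca
      have h1 : a ^ (-s₁) ≤ 2 ^ |s₁| * b ^ (-s₁) := by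
        have := rpow_comp ha hb ha2b (-s₁) hb2a
        rwa [abs_neg] at this
      have h3 : b ^ (-s₁) * b ^ (-s₂) = b ^ (-(s₁ + s₂)) := by
        rw [← Real.rpow_add hb0]
        congr 1
        try ring
      have h4 : b ^ (-(s₁ + s₂)) ≤ c ^ (-(s₁ + s₂)) :=
        Real.rpow_le_rpow_of_nonpos hc0 hcb (by linarith)
      have h5 : c ^ s₃ * c ^ (-(s₁ + s₂)) = c ^ (-σ) := by
        rw [← Real.rpow_add hc0, hσdef]
        congr 1
        try ring
      calc c ^ s₃ * a ^ (-s₁) * b ^ (-s₂)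
          ≤ c ^ s₃ * (2 ^ |s₁| * b ^ (-s₁)) * b ^ (-s₂) :=
            mul_le_mul_of_nonneg_right (mul_le_mul_of_nonneg_left h1 hcs3) hbs2
        _ = 2 ^ |s₁| * (c ^ s₃ * (b ^ (-s₁) * b ^ (-s₂))) := by ring
        _ = 2 ^ |s₁| * (c ^ s₃ * b ^ (-(s₁ + s₂))) := by rw [h3]
        _ ≤ 2 ^ |s₁| * (c ^ s₃ * c ^ (-(s₁ + s₂))) :=
            mul_le_mul_of_nonneg_left (mul_le_mul_of_nonneg_left h4 hcs3) h2s1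
        _ = 2 ^ |s₁| * c ^ (-σ) := by rw [h5]
        _ ≤ 2 ^ (|s₁| + |s₃|) * (a ^ (-σ) + b ^ (-σ) + c ^ (-σ)) :=
            final1 c hCs1 hcσ (by linarith)
  · rcases le_total b c with hbc | hcb
    · -- min is b
      have hc2a : c ≤ 2 * a := by rw [max_eq_left hba] at hcab; exact hcab
      have ha2c : a ≤ 2 * c := by rw [max_eq_left hbc] at hacb; exact hacb
      have h1 : c ^ s₃ ≤ 2 ^ |s₃| * a ^ s₃ := rpow_comp hc ha hc2a s₃ ha2c
      have h3 : a ^ s₃ * a ^ (-s₁) = a ^ (s₃ - s₁) := by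
        rw [← Real.rpow_add ha0]
        congr 1
        try ring
      have h4 : a ^ (s₃ - s₁) ≤ b ^ (s₃ - s₁) :=
        Real.rpow_le_rpow_of_nonpos hb0 hba (by linarith)
      have h5 : b ^ (s₃ - s₁) * b ^ (-s₂) = b ^ (-σ) := by
        rw [← Real.rpow_add hb0, hσdef]
        congr 1
        try ring
      calc c ^ s₃ * a ^ (-s₁) * b ^ (-s₂)
          ≤ 2 ^ |s₃| * a ^ s₃ * a ^ (-s₁) * b ^ (-s₂) :=
            mul_le_mul_of_nonneg_right (mul_le_mul_of_nonneg_right h1 has1) hbs2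
        _ = 2 ^ |s₃| * ((a ^ s₃ * a ^ (-s₁)) * b ^ (-s₂)) := by ring
        _ = 2 ^ |s₃| * (a ^ (s₃ - s₁) * b ^ (-s₂)) := by rw [h3]
        _ ≤ 2 ^ |s₃| * (b ^ (s₃ - s₁) * b ^ (-s₂)) :=
            mul_le_mul_of_nonneg_left (mul_le_mul_of_nonneg_right h4 hbs2) h2s3
        _ = 2 ^ |s₃| * b ^ (-σ) := by rw [h5]
        _ ≤ 2 ^ (|s₁| + |s₃|) * (a ^ (-σ) + b ^ (-σ) + c ^ (-σ)) :=
            final b hCs3 hbσ (by linarith)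
    · -- min is c (c ≤ b ≤ a)
      have hca : c ≤ a := le_trans hcb hba
      have ha2b : a ≤ 2 * b := by rw [max_eq_right hcb] at hacb; exact hacb
      have hb2a : b ≤ 2 * a := by rw [max_eq_right hca] at hbca; exact hbca
      have h1 : a ^ (-s₁) ≤ 2 ^ |s₁| * b ^ (-s₁) := by
        have := rpow_comp ha hb ha2b (-s₁) hb2a
        rwa [abs_neg] at this
      have h3 : b ^ (-s₁) * b ^ (-s₂) = b ^ (-(s₁ + s₂)) := by
        rw [← Real.rpow_add hb0]
        congr 1
        try ring
      have h4 : b ^ (-(s₁ + s₂)) ≤ c ^ (-(s₁ + s₂)) :=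
        Real.rpow_le_rpow_of_nonpos hc0 hcb (by linarith)
      have h5 : c ^ s₃ * c ^ (-(s₁ + s₂)) = c ^ (-σ) := by
        rw [← Real.rpow_add hc0, hσdef]
        congr 1
        try ring
      calc c ^ s₃ * a ^ (-s₁) * b ^ (-s₂)
          ≤ c ^ s₃ * (2 ^ |s₁| * b ^ (-s₁)) * b ^ (-s₂) :=
            mul_le_mul_of_nonneg_right (mul_le_mul_of_nonneg_left h1 hcs3) hbs2
        _ = 2 ^ |s₁| * (c ^ s₃ * (b ^ (-s₁) * b ^ (-s₂))) := by ring
        _ = 2 ^ |s₁| * (c ^ s₃ * b ^ (-(s₁ + s₂))) := by rw [h3]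
        _ ≤ 2 ^ |s₁| * (c ^ s₃ * c ^ (-(s₁ + s₂))) :=
            mul_le_mul_of_nonneg_left (mul_le_mul_of_nonneg_left h4 hcs3) h2s1
        _ = 2 ^ |s₁| * c ^ (-σ) := by rw [h5]
        _ ≤ 2 ^ (|s₁| + |s₃|) * (a ^ (-σ) + b ^ (-σ) + c ^ (-σ)) :=
            final1 c hCs1 hcσ (by linarith)

private lemma sumsupp {α : Type*} [DecidableEq α] {s t : Finset α} {f : α → ℝ}
    (h0 : ∀ x, 0 ≤ f x) (h : ∀ x ∈ s, f x ≠ 0 → x ∈ t) :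
    ∑ x ∈ s, f x ≤ ∑ x ∈ t, f x := by
  rw [← Finset.sum_filter_ne_zero s]
  apply Finset.sum_le_sum_of_subset_of_nonneg
  · intro x hx
    rw [Finset.mem_filter] at hx
    exact h x hx.1 hx.2
  · intro x _ _
    exact h0 x

private lemma L2_add {ι : Type*} (s : Finset ι) (u v : ι → ℝ)
    (hu : ∀ i, 0 ≤ u i) (hv : ∀ i, 0 ≤ v i) :
    Real.sqrt (∑ i ∈ s, (u i + v i) ^ 2)
      ≤ Real.sqrt (∑ i ∈ s, u i ^ 2) + Real.sqrt (∑ i ∈ s, v i ^ 2) := by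
  have hcs := Real.sum_mul_le_sqrt_mul_sqrt s u v
  set A := Real.sqrt (∑ i ∈ s, u i ^ 2) with hA
  set B := Real.sqrt (∑ i ∈ s, v i ^ 2) with hB
  have hA0 : 0 ≤ A := Real.sqrt_nonneg _
  have hB0 : 0 ≤ B := Real.sqrt_nonneg _
  have hA2 : A ^ 2 = ∑ i ∈ s, u i ^ 2 := Real.sq_sqrt (by positivity)
  have hB2 : B ^ 2 = ∑ i ∈ s, v i ^ 2 := Real.sq_sqrt (by positivity)
  rw [show A + B = Real.sqrt ((A + B) ^ 2) from (Real.sqrt_sq (by linarith)).symm]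
  apply Real.sqrt_le_sqrt
  have expand : ∑ i ∈ s, (u i + v i) ^ 2
      = (∑ i ∈ s, u i ^ 2) + 2 * (∑ i ∈ s, u i * v i) + ∑ i ∈ s, v i ^ 2 := by
    have hptw : ∀ i ∈ s, (u i + v i) ^ 2 = u i ^ 2 + 2 * (u i * v i) + v i ^ 2 :=
      fun i _ => by ring
    rw [Finset.sum_congr rfl hptw, Finset.sum_add_distrib, Finset.sum_add_distrib,
      ← Finset.mul_sum]
  nlinarith

private lemma L2_sum {ι κ : Type*} (s : Finset ι) (t : Finset κ) (u : ι → κ → ℝ)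
    (hu : ∀ i j, 0 ≤ u i j) :
    Real.sqrt (∑ i ∈ s, (∑ j ∈ t, u i j) ^ 2)
      ≤ ∑ j ∈ t, Real.sqrt (∑ i ∈ s, (u i j) ^ 2) := by
  classical
  induction t using Finset.induction with
  | empty => simp
  | @insert a t ha ih =>
    rw [Finset.sum_insert ha]
    have h1 : ∀ i, ∑ j ∈ insert a t, u i j = u i a + ∑ j ∈ t, u i j := by
      intro i
      rw [Finset.sum_insert ha]
    calc Real.sqrt (∑ i ∈ s, (∑ j ∈ insert a t, u i j) ^ 2)
        = Real.sqrt (∑ i ∈ s, (u i a + ∑ j ∈ t, u i j) ^ 2) := by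
          congr 1
          exact Finset.sum_congr rfl fun i _ => by rw [h1]
      _ ≤ Real.sqrt (∑ i ∈ s, (u i a) ^ 2)
            + Real.sqrt (∑ i ∈ s, (∑ j ∈ t, u i j) ^ 2) :=
          L2_add s _ _ (fun i => hu i a)
            (fun i => Finset.sum_nonneg fun j _ => hu i j)
      _ ≤ Real.sqrt (∑ i ∈ s, (u i a) ^ 2)
            + ∑ j ∈ t, Real.sqrt (∑ i ∈ s, (u i j) ^ 2) := by linarith

private lemma L2_mono {ι : Type*} (s : Finset ι) (u v : ι → ℝ)
    (hu : ∀ i, 0 ≤ u i) (huv : ∀ i ∈ s, u i ≤ v i) :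
    Real.sqrt (∑ i ∈ s, u i ^ 2) ≤ Real.sqrt (∑ i ∈ s, v i ^ 2) := by
  apply Real.sqrt_le_sqrt
  apply Finset.sum_le_sum
  intro i hi
  exact pow_le_pow_left₀ (hu i) (huv i hi) 2

private lemma sum_shift_le {d : ℕ} {S : Finset (Fin d → ℤ)} {F : (Fin d → ℤ) → ℝ}
    (h0 : ∀ x, 0 ≤ F x) (hs : ∀ x, F x ≠ 0 → x ∈ S)
    (Φ : Finset (Fin d → ℤ)) (θ : Fin d → ℤ) :
    ∑ ζ ∈ Φ, (F (θ - ζ)) ^ 2 ≤ ∑ η ∈ S, (F η) ^ 2 := by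
  classical
  have himg : ∑ η ∈ Φ.image (fun ζ => θ - ζ), (F η) ^ 2 = ∑ ζ ∈ Φ, (F (θ - ζ)) ^ 2 := by
    apply Finset.sum_image
    intro x _ y _ hxy
    calc x = θ - (θ - x) := (sub_sub_cancel θ x).symm
      _ = θ - (θ - y) := by rw [show θ - x = θ - y from hxy]
      _ = y := sub_sub_cancel θ y
  rw [← himg]
  apply sumsupp (fun x => sq_nonneg (F x))
  intro x _ hne
  exact hs x fun hF => hne (by rw [hF]; norm_num)

private lemma exists_B (d : ℕ) (σ : ℝ) (hσ : (d : ℝ) / 2 < σ) :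
    ∃ B : ℝ, 0 < B ∧ ∀ Φ : Finset (Fin d → ℤ),
      ∑ η ∈ Φ, (latJap η) ^ (-(2 * σ)) ≤ B := by
  classical
  rcases Nat.eq_zero_or_pos d with rfl | hd
  · refine ⟨1, one_pos, fun Φ => ?_⟩
    have hsub : Φ ⊆ {(fun i => 0 : Fin 0 → ℤ)} := fun x _ =>
      Finset.mem_singleton.2 (Subsingleton.elim _ _)
    calc ∑ η ∈ Φ, (latJap η) ^ (-(2 * σ))
        ≤ ∑ η ∈ ({(fun i => 0 : Fin 0 → ℤ)} : Finset (Fin 0 → ℤ)), (latJap η) ^ (-(2 * σ)) :=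
          Finset.sum_le_sum_of_subset_of_nonneg hsub
            (fun x _ _ => (Real.rpow_pos_of_pos (latJap_pos x) _).le)
      _ = 1 := by
          rw [Finset.sum_singleton]
          have : latJap (fun i => 0 : Fin 0 → ℤ) = 1 := by
            simp [latJap]
          rw [this, Real.one_rpow]
  · set p := σ / d with hpdef
    have hd0 : (0 : ℝ) < d := by exact_mod_cast hd
    have hp : 1 < 2 * p := by
      rw [hpdef, show 2 * (σ / (d:ℝ)) = 2 * σ / (d:ℝ) by ring, lt_div_iff₀ hd0]
      linarith
    have hp0 : 0 < p := by nlinarith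
    -- one-dimensional weight
    set w : ℤ → ℝ := fun k => ((1 : ℝ) + (k : ℝ) ^ 2) ^ (-p) with hwdef
    have hw0 : ∀ k, 0 < w k := fun k => Real.rpow_pos_of_pos (by positivity) _
    have hwsum : Summable w := by
      have habs : Summable fun k : ℤ => |(k : ℝ)| ^ (-(2 * p)) :=
        Real.summable_abs_int_rpow hp
      have hsingle : Summable fun k : ℤ => if k = 0 then (1 : ℝ) else 0 :=
        summable_of_ne_finset_zero (s := {0}) (by
          intro k hk
          simp only [Finset.mem_singleton] at hk
          simp [hk])
      refine Summable.of_nonneg_of_le (fun k => (hw0 k).le) (fun k => ?_)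
        (habs.add hsingle)
      by_cases hk : k = 0
      · subst hk
        have : w 0 = 1 := by
          rw [hwdef]
          norm_num
        rw [this]
        simp
        positivity
      · have hk1 : (1 : ℝ) ≤ |(k : ℝ)| := by
          have : (1 : ℤ) ≤ |k| := Int.one_le_abs (by omega)
          calc (1:ℝ) ≤ (|k| : ℤ) := by exact_mod_cast this
            _ = |(k : ℝ)| := by push_cast; ring
        have hk0 : (0 : ℝ) < |(k : ℝ)| := by linarith
        have h1 : w k ≤ (|(k : ℝ)| ^ 2) ^ (-p) := by
          rw [hwdef]
          apply Real.rpow_le_rpow_of_nonpos (by positivity) ?_ (by linarith)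
          nlinarith [sq_abs (k : ℝ)]
        have h2 : (|(k : ℝ)| ^ 2) ^ (-p) = |(k : ℝ)| ^ (-(2 * p)) := by
          rw [← Real.rpow_natCast |(k : ℝ)| 2, ← Real.rpow_mul hk0.le]
          norm_num
        rw [h2] at h1
        simp only [hk, if_false, add_zero]
        exact h1
    set B₁ := ∑' k, w k with hB₁def
    have hB₁bound : ∀ Ψ : Finset ℤ, ∑ k ∈ Ψ, w k ≤ B₁ :=
      fun Ψ => Summable.sum_le_tsum Ψ (fun k _ => (hw0 k).le) hwsum
    have hB₁0 : 0 < B₁ := by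
      have := hB₁bound {0}
      have h00 : 0 < w 0 := hw0 0
      calc (0:ℝ) < w 0 := h00
        _ = ∑ k ∈ ({0} : Finset ℤ), w k := (Finset.sum_singleton _ _).symm
        _ ≤ B₁ := hB₁bound {0}
    refine ⟨B₁ ^ d, by positivity, fun Φ => ?_⟩
    -- pointwise bound: latJap η ^ (-(2σ)) ≤ ∏ i, w (η i)
    have hptw : ∀ η : Fin d → ℤ, (latJap η) ^ (-(2 * σ)) ≤ ∏ i, w (η i) := by
      intro η
      set Q : ℝ := 1 + ∑ i, ((η i : ℝ)) ^ 2 with hQdef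
      have hQ1 : 1 ≤ Q := by
        have : (0:ℝ) ≤ ∑ i, ((η i : ℝ)) ^ 2 := by positivity
        linarith
      have hQ0 : (0:ℝ) < Q := by linarith
      have hlat : latJap η ^ (-(2 * σ)) = Q ^ (-σ) := by
        rw [latJap, Real.sqrt_eq_rpow, ← Real.rpow_mul hQ0.le]
        congr 1
        ring
      rw [hlat]
      have hprod : ∏ i, w (η i) = (∏ i, ((1:ℝ) + (η i : ℝ) ^ 2)) ^ (-p) := by
        rw [hwdef]
        exact Real.finset_prod_rpow Finset.univ _ (fun i _ => by positivity) (-p)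
      rw [hprod]
      have hP1 : ∀ i : Fin d, (1:ℝ) ≤ 1 + (η i : ℝ) ^ 2 :=
        fun i => by nlinarith [sq_nonneg ((η i : ℝ))]
      have hPle : (∏ i, ((1:ℝ) + (η i : ℝ) ^ 2)) ≤ Q ^ d := by
        have : ∀ i ∈ Finset.univ, (1:ℝ) + (η i : ℝ) ^ 2 ≤ Q := by
          intro i _
          have hle : ((η i : ℝ)) ^ 2 ≤ ∑ j, ((η j : ℝ)) ^ 2 :=
            Finset.single_le_sum (f := fun j => ((η j : ℝ)) ^ 2)
              (fun j _ => sq_nonneg _) (Finset.mem_univ i)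
          rw [hQdef]
          linarith
        calc (∏ i, ((1:ℝ) + (η i : ℝ) ^ 2)) ≤ ∏ _i : Fin d, Q :=
              Finset.prod_le_prod (fun i _ => by positivity) this
          _ = Q ^ d := by rw [Finset.prod_const, Finset.card_univ, Fintype.card_fin]
      have hProd0 : (0:ℝ) < ∏ i, ((1:ℝ) + (η i : ℝ) ^ 2) := by positivity
      calc Q ^ (-σ) = (Q ^ (d : ℝ)) ^ (-p) := by
            rw [← Real.rpow_mul hQ0.le]
            congr 1
            rw [hpdef]
            field_simp
          _ ≤ (∏ i, ((1:ℝ) + (η i : ℝ) ^ 2)) ^ (-p) := by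
            apply Real.rpow_le_rpow_of_nonpos hProd0 ?_ (by linarith)
            calc (∏ i, ((1:ℝ) + (η i : ℝ) ^ 2)) ≤ Q ^ d := hPle
              _ = Q ^ (d : ℝ) := (Real.rpow_natCast Q d).symm
    calc ∑ η ∈ Φ, (latJap η) ^ (-(2 * σ))
        ≤ ∑ η ∈ Φ, ∏ i, w (η i) := Finset.sum_le_sum fun η _ => hptw η
      _ ≤ ∑ η ∈ Fintype.piFinset (fun i => Φ.image (fun η => η i)), ∏ i, w (η i) := by
          apply Finset.sum_le_sum_of_subset_of_nonneg
          · intro η hη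
            rw [Fintype.mem_piFinset]
            intro i
            exact Finset.mem_image_of_mem _ hη
          · intro η _ _
            exact Finset.prod_nonneg fun i _ => (hw0 _).le
      _ = ∏ i, ∑ k ∈ Φ.image (fun η => η i), w k := (Finset.prod_univ_sum _ _).symm
      _ ≤ ∏ _i : Fin d, B₁ := by
          apply Finset.prod_le_prod
          · intro i _
            exact Finset.sum_nonneg fun k _ => (hw0 k).le
          · intro i _
            exact hB₁bound _
      _ = B₁ ^ d := by rw [Finset.prod_const, Finset.card_univ, Fintype.card_fin]

private lemma sum_shift_le' {d : ℕ} {S : Finset (Fin d → ℤ)} {F : (Fin d → ℤ) → ℝ}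
    (hs : ∀ x, F x ≠ 0 → x ∈ S)
    (Φ : Finset (Fin d → ℤ)) (θ : Fin d → ℤ) :
    ∑ ξ ∈ Φ, (F (ξ - θ)) ^ 2 ≤ ∑ η ∈ S, (F η) ^ 2 := by
  classical
  have himg : ∑ η ∈ Φ.image (fun ξ => ξ - θ), (F η) ^ 2 = ∑ ξ ∈ Φ, (F (ξ - θ)) ^ 2 := by
    apply Finset.sum_image
    intro x _ y _ hxy
    calc x = (x - θ) + θ := (sub_add_cancel x θ).symm
      _ = (y - θ) + θ := by rw [show x - θ = y - θ from hxy]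
      _ = y := sub_add_cancel y θ
  rw [← himg]
  apply sumsupp (fun x => sq_nonneg (F x))
  intro x _ hne
  exact hs x fun hF => hne (by rw [hF]; norm_num)

private lemma sqrt_sum_mul {ι : Type*} (s : Finset ι) (cst : ℝ) (hc : 0 ≤ cst) (v : ι → ℝ) :
    Real.sqrt (∑ i ∈ s, (cst * v i) ^ 2) = cst * Real.sqrt (∑ i ∈ s, v i ^ 2) := by
  have h : ∑ i ∈ s, (cst * v i) ^ 2 = cst ^ 2 * ∑ i ∈ s, v i ^ 2 := by
    rw [Finset.mul_sum]
    exact Finset.sum_congr rfl fun i _ => by ring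
  rw [h, Real.sqrt_mul (sq_nonneg cst), Real.sqrt_sq hc]

private lemma rpow_neg_sq {x : ℝ} (hx : 0 < x) (σ : ℝ) :
    (x ^ (-σ)) ^ 2 = x ^ (-(2 * σ)) := by
  rw [sq, ← Real.rpow_add hx]
  congr 1
  ring

open Pointwise

/-- Hörmander bilinear convolution estimate on `ℤ^d`.
If `s₁+s₂ ≥ 0`, `s₃ ≤ min{s₁,s₂}`, `s₃ < s₁+s₂-d/2`, then
`‖T_F(f,g)‖_{ℓ²} ≤ C ‖f‖_{ℓ²} ‖g‖_{ℓ²}` for compactly supported `f, g`. -/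
theorem statement5 (d : ℕ) (s₁ s₂ s₃ : ℝ) (h12 : 0 ≤ s₁ + s₂)
    (h31 : s₃ ≤ s₁) (h32 : s₃ ≤ s₂) (h3 : s₃ < s₁ + s₂ - (d : ℝ) / 2) :
    ∃ C : ℝ, 0 < C ∧ ∀ f g : (Fin d → ℤ) → ℂ,
      (Function.support f).Finite → (Function.support g).Finite →
      Real.sqrt (∑' ξ : Fin d → ℤ,
          ‖∑' ζ : Fin d → ℤ, (hormF s₁ s₂ s₃ ξ ζ : ℂ) * f (ξ - ζ) * g ζ‖ ^ 2)
        ≤ C * Real.sqrt (∑' ξ : Fin d → ℤ, ‖f ξ‖ ^ 2) *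
            Real.sqrt (∑' ξ : Fin d → ℤ, ‖g ξ‖ ^ 2) := by
  classical
  set σ := s₁ + s₂ - s₃ with hσdef
  have hσd : (d : ℝ) / 2 < σ := by rw [hσdef]; linarith
  obtain ⟨B, hB0, hB⟩ := exists_B d σ hσd
  set C₀ : ℝ := 2 ^ (|s₁| + |s₃|) with hC₀def
  have hC₀0 : (0:ℝ) < C₀ := Real.rpow_pos_of_pos two_pos _
  have hsB0 : (0:ℝ) < Real.sqrt B := Real.sqrt_pos.mpr hB0
  refine ⟨3 * C₀ * Real.sqrt B, by positivity, ?_⟩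
  intro f g hf hg
  set S := hf.toFinset with hSdef
  set T := hg.toFinset with hTdef
  have hmemS : ∀ x, f x ≠ 0 → x ∈ S := fun x hx => hf.mem_toFinset.mpr hx
  have hmemT : ∀ x, g x ≠ 0 → x ∈ T := fun x hx => hg.mem_toFinset.mpr hx
  set F : (Fin d → ℤ) → ℝ := fun x => ‖f x‖ with hFdef
  set G : (Fin d → ℤ) → ℝ := fun x => ‖g x‖ with hGdef
  have hF0 : ∀ x, 0 ≤ F x := fun x => norm_nonneg _
  have hG0 : ∀ x, 0 ≤ G x := fun x => norm_nonneg _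
  have hFS : ∀ x, F x ≠ 0 → x ∈ S := by
    intro x hx
    apply hmemS
    intro hfx
    exact hx (by rw [hFdef]; simp [hfx])
  have hGT : ∀ x, G x ≠ 0 → x ∈ T := by
    intro x hx
    apply hmemT
    intro hgx
    exact hx (by rw [hGdef]; simp [hgx])
  set Ω : Finset (Fin d → ℤ) := S + T with hΩdef
  set V : (Fin d → ℤ) → ℂ :=
    fun ξ => ∑ ζ ∈ T, (hormF s₁ s₂ s₃ ξ ζ : ℂ) * f (ξ - ζ) * g ζ with hVdef
  have hinner : ∀ ξ, (∑' ζ, (hormF s₁ s₂ s₃ ξ ζ : ℂ) * f (ξ - ζ) * g ζ) = V ξ := by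
    intro ξ
    apply tsum_eq_sum
    intro ζ hζ
    have hgz : g ζ = 0 := by
      by_contra h
      exact hζ (hmemT ζ h)
    rw [hgz, mul_zero]
  have houter : (∑' ξ, ‖∑' ζ, (hormF s₁ s₂ s₃ ξ ζ : ℂ) * f (ξ - ζ) * g ζ‖ ^ 2)
      = ∑ ξ ∈ Ω, ‖V ξ‖ ^ 2 := by
    rw [tsum_congr (fun ξ => by rw [hinner ξ])]
    apply tsum_eq_sum
    intro ξ hξ
    have hV0 : V ξ = 0 := by
      apply Finset.sum_eq_zero
      intro ζ hζ
      by_cases hfz : f (ξ - ζ) = 0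
      · rw [hfz, mul_zero, zero_mul]
      · exfalso
        apply hξ
        have h1 : ξ - ζ ∈ S := hmemS _ hfz
        have h2 := Finset.add_mem_add h1 hζ
        rwa [sub_add_cancel] at h2
    rw [hV0]
    simp
  have hfsum : (∑' ξ, ‖f ξ‖ ^ 2) = ∑ ξ ∈ S, F ξ ^ 2 := by
    apply tsum_eq_sum
    intro ξ hξ
    have : f ξ = 0 := by
      by_contra h
      exact hξ (hmemS ξ h)
    rw [this]
    simp
  have hgsum : (∑' ξ, ‖g ξ‖ ^ 2) = ∑ ξ ∈ T, G ξ ^ 2 := by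
    apply tsum_eq_sum
    intro ξ hξ
    have : g ξ = 0 := by
      by_contra h
      exact hξ (hmemT ξ h)
    rw [this]
    simp
  rw [houter, hfsum, hgsum]
  set Nf := Real.sqrt (∑ ξ ∈ S, F ξ ^ 2) with hNfdef
  set Ng := Real.sqrt (∑ ξ ∈ T, G ξ ^ 2) with hNgdef
  have hNf0 : 0 ≤ Nf := Real.sqrt_nonneg _
  have hNg0 : 0 ≤ Ng := Real.sqrt_nonneg _
  -- the three comparison functions
  set W1 : (Fin d → ℤ) → ℝ :=
    fun ξ => ∑ ζ ∈ T, (latJap (ξ - ζ)) ^ (-σ) * F (ξ - ζ) * G ζ with hW1def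
  set W2 : (Fin d → ℤ) → ℝ :=
    fun ξ => ∑ ζ ∈ T, (latJap ζ) ^ (-σ) * G ζ * F (ξ - ζ) with hW2def
  set W3 : (Fin d → ℤ) → ℝ :=
    fun ξ => (latJap ξ) ^ (-σ) * ∑ ζ ∈ T, F (ξ - ζ) * G ζ with hW3def
  have hrnn : ∀ η : Fin d → ℤ, (0:ℝ) ≤ (latJap η) ^ (-σ) :=
    fun η => (Real.rpow_pos_of_pos (latJap_pos η) _).le
  have hW1nn : ∀ ξ, 0 ≤ W1 ξ := fun ξ => Finset.sum_nonneg fun ζ _ =>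
    mul_nonneg (mul_nonneg (hrnn _) (hF0 _)) (hG0 _)
  have hW2nn : ∀ ξ, 0 ≤ W2 ξ := fun ξ => Finset.sum_nonneg fun ζ _ =>
    mul_nonneg (mul_nonneg (hrnn _) (hG0 _)) (hF0 _)
  have hInn : ∀ ξ, (0:ℝ) ≤ ∑ ζ ∈ T, F (ξ - ζ) * G ζ := fun ξ =>
    Finset.sum_nonneg fun ζ _ => mul_nonneg (hF0 _) (hG0 _)
  have hW3nn : ∀ ξ, 0 ≤ W3 ξ := fun ξ => mul_nonneg (hrnn _) (hInn ξ)
  -- pointwise domination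
  have hVle : ∀ ξ, ‖V ξ‖ ≤ C₀ * (W1 ξ + W2 ξ + W3 ξ) := by
    intro ξ
    calc ‖V ξ‖ ≤ ∑ ζ ∈ T, ‖(hormF s₁ s₂ s₃ ξ ζ : ℂ) * f (ξ - ζ) * g ζ‖ :=
          norm_sum_le _ _
      _ = ∑ ζ ∈ T, hormF s₁ s₂ s₃ ξ ζ * F (ξ - ζ) * G ζ := by
          apply Finset.sum_congr rfl
          intro ζ _
          rw [norm_mul, norm_mul, Complex.norm_real, Real.norm_eq_abs,
            abs_of_nonneg (hormF_nonneg s₁ s₂ s₃ ξ ζ)]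
      _ ≤ ∑ ζ ∈ T, C₀ * ((latJap (ξ - ζ)) ^ (-σ) * F (ξ - ζ) * G ζ
            + (latJap ζ) ^ (-σ) * G ζ * F (ξ - ζ)
            + (latJap ξ) ^ (-σ) * (F (ξ - ζ) * G ζ)) := by
          apply Finset.sum_le_sum
          intro ζ _
          have hk := hormF_le h12 h31 h32 ξ ζ
          rw [← hσdef] at hk
          calc hormF s₁ s₂ s₃ ξ ζ * F (ξ - ζ) * G ζ
              ≤ (C₀ * ((latJap (ξ - ζ)) ^ (-σ) + (latJap ζ) ^ (-σ) + (latJap ξ) ^ (-σ)))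
                  * F (ξ - ζ) * G ζ :=
                mul_le_mul_of_nonneg_right
                  (mul_le_mul_of_nonneg_right hk (hF0 _)) (hG0 _)
            _ = C₀ * ((latJap (ξ - ζ)) ^ (-σ) * F (ξ - ζ) * G ζ
                  + (latJap ζ) ^ (-σ) * G ζ * F (ξ - ζ)
                  + (latJap ξ) ^ (-σ) * (F (ξ - ζ) * G ζ)) := by ring
      _ = C₀ * (W1 ξ + W2 ξ + W3 ξ) := by
          rw [← Finset.mul_sum]
          congr 1
          rw [hW1def, hW2def, hW3def]
          rw [Finset.sum_add_distrib, Finset.sum_add_distrib, ← Finset.mul_sum]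
  -- CS sums of the weights
  have hkS : ∑ η ∈ S, (latJap η) ^ (-σ) * F η ≤ Real.sqrt B * Nf := by
    calc ∑ η ∈ S, (latJap η) ^ (-σ) * F η
        ≤ Real.sqrt (∑ η ∈ S, ((latJap η) ^ (-σ)) ^ 2) * Real.sqrt (∑ η ∈ S, F η ^ 2) :=
          Real.sum_mul_le_sqrt_mul_sqrt S _ _
      _ = Real.sqrt (∑ η ∈ S, (latJap η) ^ (-(2 * σ))) * Nf := by
          rw [hNfdef]
          congr 2
          exact Finset.sum_congr rfl fun η _ => rpow_neg_sq (latJap_pos η) σ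
      _ ≤ Real.sqrt B * Nf :=
          mul_le_mul_of_nonneg_right (Real.sqrt_le_sqrt (hB S)) hNf0
  have hkT : ∑ ζ ∈ T, (latJap ζ) ^ (-σ) * G ζ ≤ Real.sqrt B * Ng := by
    calc ∑ ζ ∈ T, (latJap ζ) ^ (-σ) * G ζ
        ≤ Real.sqrt (∑ ζ ∈ T, ((latJap ζ) ^ (-σ)) ^ 2) * Real.sqrt (∑ ζ ∈ T, G ζ ^ 2) :=
          Real.sum_mul_le_sqrt_mul_sqrt T _ _
      _ = Real.sqrt (∑ ζ ∈ T, (latJap ζ) ^ (-(2 * σ))) * Ng := by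
          rw [hNgdef]
          congr 2
          exact Finset.sum_congr rfl fun ζ _ => rpow_neg_sq (latJap_pos ζ) σ
      _ ≤ Real.sqrt B * Ng :=
          mul_le_mul_of_nonneg_right (Real.sqrt_le_sqrt (hB T)) hNg0
  -- bound for W2 (Young)
  have bound2 : Real.sqrt (∑ ξ ∈ Ω, W2 ξ ^ 2) ≤ Real.sqrt B * Nf * Ng := by
    calc Real.sqrt (∑ ξ ∈ Ω, W2 ξ ^ 2)
        ≤ ∑ ζ ∈ T, Real.sqrt (∑ ξ ∈ Ω, ((latJap ζ) ^ (-σ) * G ζ * F (ξ - ζ)) ^ 2) :=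
          L2_sum Ω T _ (fun ξ ζ => mul_nonneg (mul_nonneg (hrnn _) (hG0 _)) (hF0 _))
      _ = ∑ ζ ∈ T, (latJap ζ) ^ (-σ) * G ζ * Real.sqrt (∑ ξ ∈ Ω, F (ξ - ζ) ^ 2) := by
          apply Finset.sum_congr rfl
          intro ζ _
          have := sqrt_sum_mul Ω ((latJap ζ) ^ (-σ) * G ζ)
            (mul_nonneg (hrnn _) (hG0 _)) (fun ξ => F (ξ - ζ))
          simpa [mul_assoc] using this
      _ ≤ ∑ ζ ∈ T, (latJap ζ) ^ (-σ) * G ζ * Nf := by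
          apply Finset.sum_le_sum
          intro ζ _
          apply mul_le_mul_of_nonneg_left _ (mul_nonneg (hrnn _) (hG0 _))
          exact Real.sqrt_le_sqrt (sum_shift_le' hFS Ω ζ)
      _ = (∑ ζ ∈ T, (latJap ζ) ^ (-σ) * G ζ) * Nf := by rw [Finset.sum_mul]
      _ ≤ Real.sqrt B * Ng * Nf :=
          mul_le_mul_of_nonneg_right hkT hNf0
      _ = Real.sqrt B * Nf * Ng := by ring
  -- bound for W1 (convert then Young)
  set W1' : (Fin d → ℤ) → ℝ :=
    fun ξ => ∑ η ∈ S, (latJap η) ^ (-σ) * F η * G (ξ - η) with hW1'def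
  have hW1le : ∀ ξ, W1 ξ ≤ W1' ξ := by
    intro ξ
    have himg : ∑ η ∈ T.image (fun ζ => ξ - ζ), (latJap η) ^ (-σ) * F η * G (ξ - η)
        = ∑ ζ ∈ T, (latJap (ξ - ζ)) ^ (-σ) * F (ξ - ζ) * G (ξ - (ξ - ζ)) := by
      apply Finset.sum_image
      intro x _ y _ hxy
      calc x = ξ - (ξ - x) := (sub_sub_cancel ξ x).symm
        _ = ξ - (ξ - y) := by rw [show ξ - x = ξ - y from hxy]
        _ = y := sub_sub_cancel ξ y
    have heq : W1 ξ = ∑ η ∈ T.image (fun ζ => ξ - ζ), (latJap η) ^ (-σ) * F η * G (ξ - η) := by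
      rw [himg, hW1def]
      apply Finset.sum_congr rfl
      intro ζ _
      rw [sub_sub_cancel]
    rw [heq, hW1'def]
    apply sumsupp
    · intro x
      exact mul_nonneg (mul_nonneg (hrnn _) (hF0 _)) (hG0 _)
    · intro x _ hne
      apply hFS
      intro hFx
      exact hne (by rw [hFx]; ring)
  have bound1 : Real.sqrt (∑ ξ ∈ Ω, W1 ξ ^ 2) ≤ Real.sqrt B * Nf * Ng := by
    calc Real.sqrt (∑ ξ ∈ Ω, W1 ξ ^ 2)
        ≤ Real.sqrt (∑ ξ ∈ Ω, W1' ξ ^ 2) :=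
          L2_mono Ω _ _ hW1nn (fun ξ _ => hW1le ξ)
      _ ≤ ∑ η ∈ S, Real.sqrt (∑ ξ ∈ Ω, ((latJap η) ^ (-σ) * F η * G (ξ - η)) ^ 2) :=
          L2_sum Ω S _ (fun ξ η => mul_nonneg (mul_nonneg (hrnn _) (hF0 _)) (hG0 _))
      _ = ∑ η ∈ S, (latJap η) ^ (-σ) * F η * Real.sqrt (∑ ξ ∈ Ω, G (ξ - η) ^ 2) := by
          apply Finset.sum_congr rfl
          intro η _
          have := sqrt_sum_mul Ω ((latJap η) ^ (-σ) * F η)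
            (mul_nonneg (hrnn _) (hF0 _)) (fun ξ => G (ξ - η))
          simpa [mul_assoc] using this
      _ ≤ ∑ η ∈ S, (latJap η) ^ (-σ) * F η * Ng := by
          apply Finset.sum_le_sum
          intro η _
          apply mul_le_mul_of_nonneg_left _ (mul_nonneg (hrnn _) (hF0 _))
          exact Real.sqrt_le_sqrt (sum_shift_le' hGT Ω η)
      _ = (∑ η ∈ S, (latJap η) ^ (-σ) * F η) * Ng := by rw [Finset.sum_mul]
      _ ≤ Real.sqrt B * Nf * Ng :=
          mul_le_mul_of_nonneg_right hkS hNg0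
  -- bound for W3 (Schur-type)
  have bound3 : Real.sqrt (∑ ξ ∈ Ω, W3 ξ ^ 2) ≤ Real.sqrt B * Nf * Ng := by
    have hI : ∀ ξ, ∑ ζ ∈ T, F (ξ - ζ) * G ζ ≤ Nf * Ng := by
      intro ξ
      calc ∑ ζ ∈ T, F (ξ - ζ) * G ζ
          ≤ Real.sqrt (∑ ζ ∈ T, F (ξ - ζ) ^ 2) * Real.sqrt (∑ ζ ∈ T, G ζ ^ 2) :=
            Real.sum_mul_le_sqrt_mul_sqrt T _ _
        _ ≤ Nf * Ng := by
            apply mul_le_mul_of_nonneg_right _ hNg0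
            exact Real.sqrt_le_sqrt (sum_shift_le hF0 hFS T ξ)
    have hsum : ∑ ξ ∈ Ω, W3 ξ ^ 2 ≤ B * (Nf * Ng) ^ 2 := by
      calc ∑ ξ ∈ Ω, W3 ξ ^ 2
          ≤ ∑ ξ ∈ Ω, (latJap ξ) ^ (-(2 * σ)) * (Nf * Ng) ^ 2 := by
            apply Finset.sum_le_sum
            intro ξ _
            rw [hW3def]
            calc ((latJap ξ) ^ (-σ) * ∑ ζ ∈ T, F (ξ - ζ) * G ζ) ^ 2
                = ((latJap ξ) ^ (-σ)) ^ 2 * (∑ ζ ∈ T, F (ξ - ζ) * G ζ) ^ 2 := by ring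
              _ ≤ ((latJap ξ) ^ (-σ)) ^ 2 * (Nf * Ng) ^ 2 := by
                  apply mul_le_mul_of_nonneg_left _ (sq_nonneg _)
                  exact pow_le_pow_left₀ (hInn ξ) (hI ξ) 2
              _ = (latJap ξ) ^ (-(2 * σ)) * (Nf * Ng) ^ 2 := by
                  rw [rpow_neg_sq (latJap_pos ξ) σ]
        _ = (∑ ξ ∈ Ω, (latJap ξ) ^ (-(2 * σ))) * (Nf * Ng) ^ 2 := by rw [Finset.sum_mul]
        _ ≤ B * (Nf * Ng) ^ 2 :=
            mul_le_mul_of_nonneg_right (hB Ω) (sq_nonneg _)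
    calc Real.sqrt (∑ ξ ∈ Ω, W3 ξ ^ 2) ≤ Real.sqrt (B * (Nf * Ng) ^ 2) :=
          Real.sqrt_le_sqrt hsum
      _ = Real.sqrt B * (Nf * Ng) := by
          rw [Real.sqrt_mul hB0.le, Real.sqrt_sq (mul_nonneg hNf0 hNg0)]
      _ = Real.sqrt B * Nf * Ng := by ring
  -- final assembly
  calc Real.sqrt (∑ ξ ∈ Ω, ‖V ξ‖ ^ 2)
      ≤ Real.sqrt (∑ ξ ∈ Ω, (C₀ * (W1 ξ + W2 ξ + W3 ξ)) ^ 2) :=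
        L2_mono Ω _ _ (fun ξ => norm_nonneg _) (fun ξ _ => hVle ξ)
    _ = C₀ * Real.sqrt (∑ ξ ∈ Ω, (W1 ξ + W2 ξ + W3 ξ) ^ 2) :=
        sqrt_sum_mul Ω C₀ hC₀0.le _
    _ ≤ C₀ * (Real.sqrt (∑ ξ ∈ Ω, (W1 ξ + W2 ξ) ^ 2) + Real.sqrt (∑ ξ ∈ Ω, W3 ξ ^ 2)) := by
        apply mul_le_mul_of_nonneg_left _ hC₀0.le
        exact L2_add Ω _ _ (fun ξ => add_nonneg (hW1nn ξ) (hW2nn ξ)) hW3nn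
    _ ≤ C₀ * ((Real.sqrt (∑ ξ ∈ Ω, W1 ξ ^ 2) + Real.sqrt (∑ ξ ∈ Ω, W2 ξ ^ 2))
          + Real.sqrt (∑ ξ ∈ Ω, W3 ξ ^ 2)) := by
        apply mul_le_mul_of_nonneg_left _ hC₀0.le
        apply add_le_add_left
        exact L2_add Ω _ _ hW1nn hW2nn
    _ ≤ C₀ * ((Real.sqrt B * Nf * Ng + Real.sqrt B * Nf * Ng) + Real.sqrt B * Nf * Ng) := by
        apply mul_le_mul_of_nonneg_left _ hC₀0.le
        linarith [bound1, bound2, bound3]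
    _ = 3 * C₀ * Real.sqrt B * Nf * Ng := by ring
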